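/- Fix n ≥ 2. Let a, b, c, d and a′, b′, c′, d′ be complex numbers with ad − bc = 1 = a′d′ − b′c′. Then bc = b′c′ and a^{n+1}b^{n−1} + c^{n−1}d^{n+1} = a′^{n+1}b′^{n−1} + c′^{n−1}d′^{n+1} hold if and only if there exist t ∈ ℂ, t ≠ 0, and ε ∈ {1, −1} such that either (a′, b′t^{n+1}, c′, d′t^{n−1}) = (ε t^{n−1} a, ε b, ε t^{n+1} c, ε d) or (a′, b′t^{n+1}, c′, d′t^{n−1}) = (ε t^{n−1} d, ε c, ε t^{n+1} b, ε a). (Corollary 1.3: the second alternative corresponds to conjugating after interchanging the two critical points, via (a,b,c,d) ↦ (d,c,b,a); hence X = bc and Y = Y₁ + Y₂ form a complete set of invariants for unmarked bicritical maps, and the moduli space M_n is biholomorphic to ℂ².) -/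

import Mathlib

lemma back (p : ℕ) (t ε a b c d a' b' c' d' : ℂ) (ht : t ≠ 0) (hε : ε ^ 2 = 1)
    (h1 : a' = ε * t ^ p * a) (h2 : b' * t ^ (p + 2) = ε * b)
    (h3 : c' = ε * t ^ (p + 2) * c) (h4 : d' * t ^ p = ε * d) :
    b * c = b' * c' ∧
      a ^ (p + 2) * b ^ p + c ^ p * d ^ (p + 2) =
        a' ^ (p + 2) * b' ^ p + c' ^ p * d' ^ (p + 2) := by
  have hE : ε ^ (p + 2) * ε ^ p = 1 := by
    rw [← pow_add, show p + 2 + p = 2 * (p + 1) by ring, pow_mul, hε, one_pow]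
  have hswap : (t ^ p) ^ (p + 2) = (t ^ (p + 2)) ^ p := by
    rw [← pow_mul, ← pow_mul, Nat.mul_comm]
  have hT : (t ^ (p + 2)) ^ p ≠ 0 := pow_ne_zero _ (pow_ne_zero _ ht)
  have hT2 : (t ^ p) ^ (p + 2) ≠ 0 := pow_ne_zero _ (pow_ne_zero _ ht)
  constructor
  · -- b*c = b'*c'
    have hb' : b' = ε * b / t ^ (p + 2) := by
      field_simp
      linear_combination h2
    rw [hb', h3]
    field_simp
    linear_combination -(b * c) * hε
  · have e1 : a' ^ (p + 2) * b' ^ p * (t ^ (p + 2)) ^ p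
        = a ^ (p + 2) * b ^ p * (t ^ (p + 2)) ^ p := by
      calc a' ^ (p + 2) * b' ^ p * (t ^ (p + 2)) ^ p
          = (ε * t ^ p * a) ^ (p + 2) * (b' * t ^ (p + 2)) ^ p := by rw [h1]; ring
        _ = (ε * t ^ p * a) ^ (p + 2) * (ε * b) ^ p := by rw [h2]
        _ = (ε ^ (p + 2) * ε ^ p) * ((t ^ p) ^ (p + 2)) * (a ^ (p + 2) * b ^ p) := by
            rw [mul_pow, mul_pow, mul_pow]; ring
        _ = a ^ (p + 2) * b ^ p * (t ^ (p + 2)) ^ p := by rw [hE, hswap]; ring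
    have e2 : c' ^ p * d' ^ (p + 2) * (t ^ p) ^ (p + 2)
        = c ^ p * d ^ (p + 2) * (t ^ p) ^ (p + 2) := by
      calc c' ^ p * d' ^ (p + 2) * (t ^ p) ^ (p + 2)
          = (ε * t ^ (p + 2) * c) ^ p * (d' * t ^ p) ^ (p + 2) := by rw [h3]; ring
        _ = (ε * t ^ (p + 2) * c) ^ p * (ε * d) ^ (p + 2) := by rw [h4]
        _ = (ε ^ (p + 2) * ε ^ p) * ((t ^ (p + 2)) ^ p) * (c ^ p * d ^ (p + 2)) := by
            rw [mul_pow, mul_pow, mul_pow]; ring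
        _ = c ^ p * d ^ (p + 2) * (t ^ p) ^ (p + 2) := by rw [hE, ← hswap]; ring
    have e1' := mul_right_cancel₀ hT e1
    have e2' := mul_right_cancel₀ hT2 e2
    rw [e1', e2']


lemma case1 (p : ℕ) (hp : 1 ≤ p) (a b c d a' b' c' d' : ℂ)
    (h : a * d - b * c = 1) (h' : a' * d' - b' * c' = 1)
    (hX : b * c = b' * c')
    (h1 : a ^ (p + 2) * b ^ p = a' ^ (p + 2) * b' ^ p)
    (ha : a ≠ 0) (hb : b ≠ 0) :
    ∃ t : ℂ, t ≠ 0 ∧ ∃ ε : ℂ, (ε = 1 ∨ ε = -1) ∧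
      (a' = ε * t ^ p * a ∧ b' * t ^ (p + 2) = ε * b ∧
       c' = ε * t ^ (p + 2) * c ∧ d' * t ^ p = ε * d) := by
  have had : a * d = a' * d' := by linear_combination h - h' + hX
  have hY1 : a' ^ (p + 2) * b' ^ p ≠ 0 := by
    rw [← h1]; exact mul_ne_zero (pow_ne_zero _ ha) (pow_ne_zero _ hb)
  have ha' : a' ≠ 0 := by
    intro e; apply hY1; rw [e, zero_pow (by omega : p + 2 ≠ 0), zero_mul]
  have hb' : b' ≠ 0 := by
    intro e; apply hY1; rw [e, zero_pow (by omega : p ≠ 0), mul_zero]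
  obtain ⟨t, ht2⟩ := IsAlgClosed.exists_pow_nat_eq ((a * b) / (a' * b')) (show 0 < 2 by norm_num)
  have ht : t ≠ 0 := by
    intro e
    rw [e, zero_pow (by norm_num : (2 : ℕ) ≠ 0)] at ht2
    have := div_ne_zero (mul_ne_zero ha hb) (mul_ne_zero ha' hb')
    exact this ht2.symm
  have ht2' : t ^ 2 * (a' * b') = a * b := by
    field_simp at ht2; linear_combination ht2
  have hsq : (a' - t ^ p * a) * (a' + t ^ p * a) = 0 := by
    have key2 : a' ^ 2 * (a' ^ p * b' ^ p) = (t ^ p * a) ^ 2 * (a' ^ p * b' ^ p) := by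
      calc a' ^ 2 * (a' ^ p * b' ^ p) = a' ^ (p + 2) * b' ^ p := by rw [pow_add]; ring
        _ = a ^ (p + 2) * b ^ p := h1.symm
        _ = a ^ 2 * (a * b) ^ p := by rw [mul_pow, pow_add]; ring
        _ = a ^ 2 * (t ^ 2 * (a' * b')) ^ p := by rw [ht2']
        _ = (t ^ p * a) ^ 2 * (a' ^ p * b' ^ p) := by
            rw [mul_pow, mul_pow, mul_pow, ← pow_mul, ← pow_mul, Nat.mul_comm]; ring
    have := mul_right_cancel₀
      (mul_ne_zero (pow_ne_zero _ ha') (pow_ne_zero _ hb')) key2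
    linear_combination this
  -- helper to finish given ε and heq
  have finish : ∀ ε : ℂ, ε ^ 2 = 1 → a' = ε * t ^ p * a →
      (b' * t ^ (p + 2) = ε * b ∧ c' = ε * t ^ (p + 2) * c ∧ d' * t ^ p = ε * d) := by
    intro ε hε2 heq
    have hbeq : b' * t ^ (p + 2) = ε * b := by
      have hcan : a * (b' * t ^ (p + 2)) = a * (ε * b) := by
        linear_combination ε * ht2' - (ε * t ^ 2 * b') * heq - (t ^ (p + 2) * a * b') * hε2
      exact mul_left_cancel₀ ha hcan
    refine ⟨hbeq, ?_, ?_⟩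
    · have hcan : b' * c' = b' * (ε * t ^ (p + 2) * c) := by
        linear_combination (-1 : ℂ) * hX - ε * c * hbeq - b * c * hε2
      exact mul_left_cancel₀ hb' hcan
    · have hcan : a * (d' * t ^ p) = a * (ε * d) := by
        linear_combination -ε * had - ε * d' * heq - (t ^ p * a * d') * hε2
      exact mul_left_cancel₀ ha hcan
  rcases mul_eq_zero.mp hsq with e | e
  · have heq : a' = (1 : ℂ) * t ^ p * a := by linear_combination e
    obtain ⟨h2, h3, h4⟩ := finish 1 (by norm_num) heq
    exact ⟨t, ht, 1, Or.inl rfl, heq, h2, h3, h4⟩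
  · have heq : a' = (-1 : ℂ) * t ^ p * a := by linear_combination e
    obtain ⟨h2, h3, h4⟩ := finish (-1) (by norm_num) heq
    exact ⟨t, ht, -1, Or.inr rfl, heq, h2, h3, h4⟩

lemma key (p : ℕ) (hp : 1 ≤ p) (a b c d a' b' c' d' : ℂ)
    (h : a * d - b * c = 1) (h' : a' * d' - b' * c' = 1)
    (hX : b * c = b' * c')
    (h1 : a ^ (p + 2) * b ^ p = a' ^ (p + 2) * b' ^ p)
    (h2 : c ^ p * d ^ (p + 2) = c' ^ p * d' ^ (p + 2)) :
    ∃ t : ℂ, t ≠ 0 ∧ ∃ ε : ℂ, (ε = 1 ∨ ε = -1) ∧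
      (a' = ε * t ^ p * a ∧ b' * t ^ (p + 2) = ε * b ∧
       c' = ε * t ^ (p + 2) * c ∧ d' * t ^ p = ε * d) := by
  have hp2 : (p : ℕ) ≠ 0 := by omega
  have hp3 : (p + 2 : ℕ) ≠ 0 := by omega
  by_cases hab : a ≠ 0 ∧ b ≠ 0
  · exact case1 p hp a b c d a' b' c' d' h h' hX h1 hab.1 hab.2
  by_cases hcd : c ≠ 0 ∧ d ≠ 0
  · obtain ⟨t, ht, ε, hε, e1, e2, e3, e4⟩ :=
      case1 p hp d c b a d' c' b' a'
        (by linear_combination h) (by linear_combination h')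
        (by linear_combination hX) (by linear_combination h2) hcd.2 hcd.1
    have htp : t ^ p ≠ 0 := pow_ne_zero _ ht
    have htp2 : t ^ (p + 2) ≠ 0 := pow_ne_zero _ ht
    refine ⟨t⁻¹, inv_ne_zero ht, ε, hε, ?_, ?_, ?_, ?_⟩
    · rw [inv_pow]; field_simp; linear_combination e4
    · rw [inv_pow]; field_simp; linear_combination e3
    · rw [inv_pow]; field_simp; linear_combination e2
    · rw [inv_pow]; field_simp; linear_combination e1
  · push_neg at hab hcd
    by_cases hb : b = 0
    · -- b = 0, so ad = 1, a,d ≠ 0, c = 0; primed: b' = 0, c' = 0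
      have ha : a ≠ 0 := by intro e; rw [e, hb] at h; simp at h
      have hd : d ≠ 0 := by intro e; rw [e, hb] at h; simp at h
      have hc : c = 0 := by by_contra hc0; exact hd (hcd hc0)
      have hb' : b' = 0 := by
        rcases mul_eq_zero.mp (show a' ^ (p + 2) * b' ^ p = 0 by
          rw [← h1, hb, zero_pow hp2, mul_zero]) with e | e
        · exfalso
          have ha0 : a' = 0 := pow_eq_zero_iff hp3 |>.mp e
          have : b' * c' = 0 := by rw [← hX, hb]; ring
          rw [ha0] at h'; rw [this] at h'; simp at h'
        · exact pow_eq_zero_iff hp2 |>.mp e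
      have hc' : c' = 0 := by
        rcases mul_eq_zero.mp (show c' ^ p * d' ^ (p + 2) = 0 by
          rw [← h2, hc, zero_pow hp2, zero_mul]) with e | e
        · exact pow_eq_zero_iff hp2 |>.mp e
        · exfalso
          have hd0 : d' = 0 := pow_eq_zero_iff hp3 |>.mp e
          rw [hd0, hb'] at h'; simp at h'
      have ha' : a' ≠ 0 := by
        intro e; rw [e, hb'] at h'; simp at h'
      obtain ⟨t, htp⟩ := IsAlgClosed.exists_pow_nat_eq (a' / a) (show 0 < p by omega)
      have ht : t ≠ 0 := by
        intro e; rw [e, zero_pow hp2] at htp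
        exact (div_ne_zero ha' ha) htp.symm
      refine ⟨t, ht, 1, Or.inl rfl, ?_, ?_, ?_, ?_⟩
      · rw [htp]; field_simp
      · rw [hb, hb']; ring
      · rw [hc, hc']; ring
      · rw [htp]
        have had : a * d = a' * d' := by linear_combination h - h' + hX
        field_simp
        linear_combination -had
    · -- b ≠ 0, so a = 0, bc = -1, c ≠ 0, d = 0; primed: a' = 0, d' = 0
      have ha : a = 0 := by by_contra ha0; exact hb (hab ha0)
      have hc : c ≠ 0 := by intro e; rw [ha, e] at h; simp at h
      have hd : d = 0 := hcd hc
      have hbc' : b' * c' = -1 := by rw [← hX]; linear_combination -h + d * ha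
      have hb' : b' ≠ 0 := by intro e; rw [e, zero_mul] at hbc'; norm_num at hbc'
      have hc' : c' ≠ 0 := by intro e; rw [e, mul_zero] at hbc'; norm_num at hbc'
      have ha' : a' = 0 := by
        have e0 : a' ^ (p + 2) * b' ^ p = 0 := by
          rw [← h1, ha, zero_pow hp3, zero_mul]
        rcases mul_eq_zero.mp e0 with e | e
        · exact pow_eq_zero_iff hp3 |>.mp e
        · exact absurd (pow_eq_zero_iff hp2 |>.mp e) hb'
      have hd' : d' = 0 := by
        have e0 : c' ^ p * d' ^ (p + 2) = 0 := by
          rw [← h2, hd, zero_pow hp3, mul_zero]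
        rcases mul_eq_zero.mp e0 with e | e
        · exact absurd (pow_eq_zero_iff hp2 |>.mp e) hc'
        · exact pow_eq_zero_iff hp3 |>.mp e
      obtain ⟨t, htp⟩ := IsAlgClosed.exists_pow_nat_eq (c' / c) (show 0 < p + 2 by omega)
      have ht : t ≠ 0 := by
        intro e; rw [e, zero_pow hp3] at htp
        exact (div_ne_zero hc' hc) htp.symm
      refine ⟨t, ht, 1, Or.inl rfl, ?_, ?_, ?_, ?_⟩
      · rw [ha, ha']; ring
      · rw [htp]; field_simp; linear_combination -hX
      · rw [htp]; field_simp
      · rw [hd, hd']; ring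

/-- Corollary 1.3: two normalized bicritical maps with `ad - bc = 1` have the
same unmarked invariants `X = bc` and `Y = Y₁ + Y₂` if and only if their
coefficient quadruples are related either by the rescaling transformation
`(a,b,c,d) ↦ ±(t^{n-1} a, t^{-(n+1)} b, t^{n+1} c, t^{-(n-1)} d)` or by this
transformation composed with the critical-point interchange
`(a,b,c,d) ↦ (d,c,b,a)`. -/

theorem stmt3 (n : ℕ) (hn : 2 ≤ n) (a b c d a' b' c' d' : ℂ)
    (h : a * d - b * c = 1) (h' : a' * d' - b' * c' = 1) :
    (b * c = b' * c' ∧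
      a ^ (n + 1) * b ^ (n - 1) + c ^ (n - 1) * d ^ (n + 1) =
        a' ^ (n + 1) * b' ^ (n - 1) + c' ^ (n - 1) * d' ^ (n + 1)) ↔
    (∃ t : ℂ, t ≠ 0 ∧ ∃ ε : ℂ, (ε = 1 ∨ ε = -1) ∧
      ((a' = ε * t ^ (n - 1) * a ∧ b' * t ^ (n + 1) = ε * b ∧
        c' = ε * t ^ (n + 1) * c ∧ d' * t ^ (n - 1) = ε * d) ∨
       (a' = ε * t ^ (n - 1) * d ∧ b' * t ^ (n + 1) = ε * c ∧
        c' = ε * t ^ (n + 1) * b ∧ d' * t ^ (n - 1) = ε * a))) := by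
  obtain ⟨p, rfl⟩ : ∃ p, n = p + 1 := ⟨n - 1, by omega⟩
  have hp : 1 ≤ p := by omega
  simp only [Nat.add_sub_cancel, show p + 1 + 1 = p + 2 from rfl]
  constructor
  · rintro ⟨hX, hY⟩
    have had : a * d = a' * d' := by linear_combination h - h' + hX
    have e0 : (b * c) ^ p * (a * d) ^ (p + 2) = (b' * c') ^ p * (a' * d') ^ (p + 2) := by
      rw [hX, had]
    have hprod : a ^ (p + 2) * b ^ p * (c ^ p * d ^ (p + 2)) =
        a' ^ (p + 2) * b' ^ p * (c' ^ p * d' ^ (p + 2)) := by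
      calc a ^ (p + 2) * b ^ p * (c ^ p * d ^ (p + 2))
          = (b * c) ^ p * (a * d) ^ (p + 2) := by rw [mul_pow, mul_pow]; ring
        _ = (b' * c') ^ p * (a' * d') ^ (p + 2) := e0
        _ = a' ^ (p + 2) * b' ^ p * (c' ^ p * d' ^ (p + 2)) := by
            rw [mul_pow, mul_pow]; ring
    have hquad : (a ^ (p + 2) * b ^ p - a' ^ (p + 2) * b' ^ p) *
        (a ^ (p + 2) * b ^ p - c' ^ p * d' ^ (p + 2)) = 0 := by
      linear_combination -hprod + (a ^ (p + 2) * b ^ p) * hY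
    rcases mul_eq_zero.mp hquad with e | e
    · have h1 : a ^ (p + 2) * b ^ p = a' ^ (p + 2) * b' ^ p := by linear_combination e
      have h2 : c ^ p * d ^ (p + 2) = c' ^ p * d' ^ (p + 2) := by
        linear_combination hY - h1
      obtain ⟨t, ht, ε, hε, H⟩ := key p hp a b c d a' b' c' d' h h' hX h1 h2
      exact ⟨t, ht, ε, hε, Or.inl H⟩
    · have h1 : a ^ (p + 2) * b ^ p = c' ^ p * d' ^ (p + 2) := by linear_combination e
      have h2 : c ^ p * d ^ (p + 2) = a' ^ (p + 2) * b' ^ p := by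
        linear_combination hY - h1
      obtain ⟨t, ht, ε, hε, H1, H2, H3, H4⟩ := key p hp d c b a a' b' c' d'
        (by linear_combination h) h' (by linear_combination hX)
        (by linear_combination h2) (by linear_combination h1)
      exact ⟨t, ht, ε, hε, Or.inr ⟨H1, H2, H3, H4⟩⟩
  · rintro ⟨t, ht, ε, hε, H | H⟩
    · have hε2 : ε ^ 2 = 1 := by rcases hε with rfl | rfl <;> norm_num
      exact back p t ε a b c d a' b' c' d' ht hε2 H.1 H.2.1 H.2.2.1 H.2.2.2
    · have hε2 : ε ^ 2 = 1 := by rcases hε with rfl | rfl <;> norm_num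
      obtain ⟨G1, G2⟩ := back p t ε d c b a a' b' c' d' ht hε2 H.1 H.2.1 H.2.2.1 H.2.2.2
      exact ⟨by linear_combination G1, by linear_combination G2⟩
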